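/- Let f and g be symmetric functions of degree at most n. If f[Ξ_μ] = g[Ξ_μ] for every partition μ with |μ| ≤ n, then f = g. -/

import Mathlib

open scoped BigOperators

/-- Same eigenvalue collection, as a multiset. -/
noncomputable def xiM (μ : Multiset ℕ) : Multiset ℂ :=
  μ.bind fun r => (Multiset.range r).map fun k =>
    Complex.exp (2 * Real.pi * Complex.I * k / r)

/-- Evaluation of the power sum `p_n` on a multiset of values. -/
noncomputable def pEvalM (n : ℕ) (S : Multiset ℂ) : ℂ := (S.map (· ^ n)).sum

/-- The ring of symmetric functions, modeled as polynomials in the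
(algebraically independent) power sums `p_1, p_2, …`:  variable `k : ℕ+` stands for `p_k`. -/
abbrev SymF := MvPolynomial ℕ+ ℂ

/-- Evaluation of a symmetric function at the eigenvalues `Ξ_μ` of a permutation
matrix of cycle type `μ` (each `p_k` goes to `p_k[Ξ_μ]`). -/
noncomputable def evalXi (μ : Multiset ℕ) (f : SymF) : ℂ :=
  MvPolynomial.eval (fun k : ℕ+ => pEvalM (k : ℕ) (xiM μ)) f

/- ### Auxiliary lemmas -/

lemma rootSum (r k : ℕ) (hr : 0 < r) (hk : 0 < k) :
    ((Multiset.range r).map fun j : ℕ => Complex.exp (2 * Real.pi * Complex.I * j / r) ^ k).sum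
      = if r ∣ k then (r : ℂ) else 0 := by
  have hrC : (r : ℂ) ≠ 0 := Nat.cast_ne_zero.mpr hr.ne'
  have hms : ((Multiset.range r).map fun j : ℕ =>
        Complex.exp (2 * Real.pi * Complex.I * j / r) ^ k).sum
      = ∑ j ∈ Finset.range r, Complex.exp (2 * Real.pi * Complex.I * k / r) ^ j := by
    rw [Finset.sum_eq_multiset_sum, Finset.range_val]
    congr 1
    apply Multiset.map_congr rfl
    intro j _
    rw [← Complex.exp_nat_mul, ← Complex.exp_nat_mul]
    congr 1
    ring
  rw [hms]
  by_cases hdvd : r ∣ k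
  · obtain ⟨d, hd⟩ := hdvd
    have hζ : Complex.exp (2 * Real.pi * Complex.I * k / r) = 1 := by
      have harg : 2 * (Real.pi : ℂ) * Complex.I * k / r = (d : ℤ) * (2 * Real.pi * Complex.I) := by
        subst hd
        push_cast
        field_simp
      rw [harg, Complex.exp_int_mul_two_pi_mul_I]
    rw [hζ]
    simp [hd]
  · have hζ1 : Complex.exp (2 * Real.pi * Complex.I * k / r) ≠ 1 := by
      intro hζ
      rcases Complex.exp_eq_one_iff.mp hζ with ⟨m, hm⟩
      have h2 : (2 * (Real.pi : ℂ) * Complex.I) ≠ 0 := by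
        simp [Real.pi_ne_zero, Complex.I_ne_zero]
      have hm' : 2 * (Real.pi : ℂ) * Complex.I * k = m * (2 * Real.pi * Complex.I) * r := by
        field_simp at hm
        linear_combination (2 * (Real.pi : ℂ) * Complex.I) * hm
      have hk' : (k : ℂ) = (m : ℂ) * r := by
        apply mul_left_cancel₀ h2
        linear_combination hm'
      have hZ : (k : ℤ) = m * r := by exact_mod_cast hk'
      exact hdvd (Int.natCast_dvd_natCast.mp ⟨m, by rw [hZ]; ring⟩)
    rw [geom_sum_eq hζ1]
    have hζr : Complex.exp (2 * Real.pi * Complex.I * k / r) ^ r = 1 := by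
      rw [← Complex.exp_nat_mul]
      have harg : (r : ℂ) * (2 * Real.pi * Complex.I * k / r)
          = (k : ℤ) * (2 * Real.pi * Complex.I) := by
        push_cast
        field_simp
      rw [harg, Complex.exp_int_mul_two_pi_mul_I]
    rw [hζr]
    simp [hdvd]

lemma pEvalM_xiM (μ : Multiset ℕ) (k : ℕ) :
    pEvalM k (xiM μ) = (μ.map fun r =>
      ((Multiset.range r).map fun j : ℕ =>
        Complex.exp (2 * Real.pi * Complex.I * j / r) ^ k).sum).sum := by
  unfold pEvalM xiM
  rw [Multiset.map_bind, Multiset.sum_bind]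
  congr 1
  apply Multiset.map_congr rfl
  intro r _
  simp [Multiset.map_map, Function.comp]

/-- The evaluation point: `p_{φ i}` goes to `∑_{φ j ∣ φ i} φ j * a j`. -/
noncomputable def Vf {s : ℕ} (φ : Fin s → ℕ+) (a : Fin s → ℕ) (i : Fin s) : ℂ :=
  ∑ j : Fin s, if (φ j : ℕ) ∣ (φ i : ℕ) then ((φ j : ℕ) : ℂ) * (a j : ℂ) else 0

lemma keyL : ∀ (s : ℕ) (φ : Fin s → ℕ+), StrictAnti φ → ∀ (n : ℕ) (F : MvPolynomial (Fin s) ℂ),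
    (∀ m ∈ F.support, (∑ i, (φ i : ℕ) * m i) ≤ n) →
    (∀ a : Fin s → ℕ, (∑ i, (φ i : ℕ) * a i) ≤ n → MvPolynomial.eval (Vf φ a) F = 0) →
    F = 0 := by
  intro s
  induction s with
  | zero =>
    intro φ hφ n F hw hz
    obtain ⟨c, rfl⟩ := MvPolynomial.C_surjective (Fin 0) F
    have h0 := hz (fun _ => 0) (by simp)
    rw [MvPolynomial.eval_C] at h0
    rw [h0, map_zero]
  | succ s ih =>
    intro φ hφ n F hw hz
    have hφ0pos : 0 < (φ 0 : ℕ) := (φ 0).pos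
    set q := MvPolynomial.finSuccEquiv ℂ s F with hq
    have hco : ∀ j : ℕ, n < (φ 0 : ℕ) * j → q.coeff j = 0 := by
      intro j hj
      by_contra hne
      obtain ⟨m, hm⟩ := MvPolynomial.ne_zero_iff.mp hne
      have hmem : (Finsupp.cons j m) ∈ F.support := by
        rw [MvPolynomial.mem_support_iff, ← MvPolynomial.finSuccEquiv_coeff_coeff]
        exact hm
      have h1 := hw _ hmem
      rw [Fin.sum_univ_succ] at h1
      simp only [Finsupp.cons_zero, Finsupp.cons_succ] at h1
      have h2 : (φ 0 : ℕ) * j ≤ n := le_trans (Nat.le_add_right _ _) h1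
      exact absurd h2 (not_le.mpr hj)
    have hstep : ∀ d : ℕ, ∀ j : ℕ, n + 1 ≤ j + d → q.coeff j = 0 := by
      intro d
      induction d with
      | zero =>
        intro j hj
        apply hco
        have h3 : j ≤ (φ 0 : ℕ) * j := Nat.le_mul_of_pos_left j hφ0pos
        have h4 : n < j := by omega
        exact lt_of_lt_of_le h4 h3
      | succ d ihd =>
        intro j hj
        rcases Nat.lt_or_ge (j + d) (n + 1) with hlt | hge
        swap
        · exact ihd j hge
        have hhigh : ∀ j' : ℕ, j < j' → q.coeff j' = 0 := fun j' hj' => ihd j' (by omega)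
        by_cases hjn : (φ 0 : ℕ) * j ≤ n
        swap
        · exact hco j (not_le.mp hjn)
        apply ih (φ ∘ Fin.succ) (hφ.comp_strictMono Fin.strictMono_succ) (n - (φ 0 : ℕ) * j)
        · intro m hm
          have hmem : (Finsupp.cons j m) ∈ F.support := by
            rw [MvPolynomial.mem_support_iff, ← MvPolynomial.finSuccEquiv_coeff_coeff]
            exact MvPolynomial.mem_support_iff.mp hm
          have h1 := hw _ hmem
          rw [Fin.sum_univ_succ] at h1
          simp only [Finsupp.cons_zero, Finsupp.cons_succ] at h1
          exact Nat.le_sub_of_add_le (by rwa [add_comm] at h1)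
        · intro a' ha'
          set W' := ∑ i : Fin s, ((φ ∘ Fin.succ) i : ℕ) * a' i with hW'
          have hW'n : W' ≤ n := le_trans ha' (Nat.sub_le _ _)
          have hWn : (φ 0 : ℕ) * j + W' ≤ n := by
            have := Nat.add_le_of_le_sub' hjn ha'
            omega
          set D := (n - W') / (φ 0 : ℕ) with hD
          have hjD : j ≤ D := by
            rw [hD, Nat.le_div_iff_mul_le hφ0pos, mul_comm]
            omega
          set c0 : ℂ := ∑ i : Fin s,
            (if (φ (Fin.succ i) : ℕ) ∣ (φ 0 : ℕ) then
              ((φ (Fin.succ i) : ℕ) : ℂ) * (a' i : ℂ) else 0) with hc0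
          set P : Polynomial ℂ :=
            Polynomial.map (MvPolynomial.eval (Vf (φ ∘ Fin.succ) a')) q with hP
          have hVsplit : ∀ t : ℕ, (Vf φ (Fin.cons t a')) =
              Fin.cons (((φ 0 : ℕ) : ℂ) * (t : ℂ) + c0) (Vf (φ ∘ Fin.succ) a') := by
            intro t
            funext i
            refine Fin.cases ?_ ?_ i
            · rw [Fin.cons_zero]
              show (∑ j' : Fin (s + 1), _) = _
              rw [Fin.sum_univ_succ]
              simp only [Fin.cons_zero, Fin.cons_succ]
              rw [if_pos dvd_rfl, hc0]
            · intro i'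
              rw [Fin.cons_succ]
              show (∑ j' : Fin (s + 1), _) = _
              rw [Fin.sum_univ_succ]
              have h0 : ¬ ((φ 0 : ℕ) ∣ (φ (Fin.succ i') : ℕ)) := by
                intro hdvd
                have h1 : (φ 0 : ℕ) ≤ (φ (Fin.succ i') : ℕ) :=
                  Nat.le_of_dvd (φ (Fin.succ i')).pos hdvd
                have h2 : φ (Fin.succ i') < φ 0 := hφ (Fin.succ_pos i')
                exact absurd h1 (not_le.mpr h2)
              rw [if_neg h0, zero_add]
              simp only [Fin.cons_succ]
              rfl
          have hPeval : ∀ t : ℕ, t ≤ D → P.eval (((φ 0 : ℕ) : ℂ) * (t : ℂ) + c0) = 0 := by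
            intro t ht
            have hφD : (φ 0 : ℕ) * D ≤ n - W' := by
              rw [hD, mul_comm]
              exact Nat.div_mul_le_self _ _
            have hbudget :
                (∑ i : Fin (s + 1), (φ i : ℕ) * (Fin.cons t a' : Fin (s+1) → ℕ) i) ≤ n := by
              rw [Fin.sum_univ_succ]
              simp only [Fin.cons_zero, Fin.cons_succ]
              have h1 : (φ 0 : ℕ) * t ≤ (φ 0 : ℕ) * D := Nat.mul_le_mul_left _ ht
              have h2 : (∑ i : Fin s, (φ i.succ : ℕ) * a' i) = W' := rfl
              rw [h2]
              omega
            have h0 := hz (Fin.cons t a') hbudget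
            rw [hVsplit t, MvPolynomial.eval_eq_eval_mv_eval'] at h0
            exact h0
          have hPdeg : P.natDegree ≤ j := by
            apply Polynomial.natDegree_le_iff_coeff_eq_zero.mpr
            intro N hN
            rw [hP, Polynomial.coeff_map, hhigh N hN, map_zero]
          have hinj : Function.Injective (fun t : ℕ => ((φ 0 : ℕ) : ℂ) * (t : ℂ) + c0) := by
            intro t1 t2 h12
            simp only [add_left_inj] at h12
            have hne : ((φ 0 : ℕ) : ℂ) ≠ 0 := Nat.cast_ne_zero.mpr hφ0pos.ne'
            exact Nat.cast_injective (mul_left_cancel₀ hne h12)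
          have hP0 : P = 0 := by
            apply Polynomial.eq_zero_of_natDegree_lt_card_of_eval_eq_zero' P
              ((Finset.range (D + 1)).image fun t : ℕ => ((φ 0 : ℕ) : ℂ) * (t : ℂ) + c0)
            · intro x hx
              simp only [Finset.mem_image, Finset.mem_range] at hx
              obtain ⟨t, ht, rfl⟩ := hx
              exact hPeval t (Nat.lt_succ_iff.mp ht)
            · rw [Finset.card_image_of_injective _ hinj, Finset.card_range]
              exact lt_of_le_of_lt hPdeg (Nat.lt_succ_of_le hjD)
          have hPc : P.coeff j = 0 := by rw [hP0]; simp
          rw [hP, Polynomial.coeff_map] at hPc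
          exact hPc
    have hq0 : q = 0 := Polynomial.ext fun j => by
      rw [hstep (n + 1) j (by omega), Polynomial.coeff_zero]
    apply (MvPolynomial.finSuccEquiv ℂ s).injective
    rw [map_zero, ← hq, hq0]

/-- Two symmetric functions (polynomials in the power sums `p_k`, `k : ℕ+`) of degree at
most `n` which agree at the eigenvalues `Ξ_μ` of permutation matrices for all partitions
`μ` with `|μ| ≤ n` are equal. -/
theorem symF_eq_of_eval_small (n : ℕ) (f g : SymF)
    (hf : ∀ m ∈ f.support, (m.sum fun k e => (k : ℕ) * e) ≤ n)
    (hg : ∀ m ∈ g.support, (m.sum fun k e => (k : ℕ) * e) ≤ n)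
    (h : ∀ μ : Multiset ℕ, (∀ i ∈ μ, 0 < i) → μ.sum ≤ n → evalXi μ f = evalXi μ g) :
    f = g := by
  classical
  have hzero : f - g = 0 := by
    obtain ⟨s0, ψ, hψ, q0, hFq⟩ := MvPolynomial.exists_fin_rename (f - g)
    set T : Finset ℕ+ := Finset.univ.image ψ with hT
    have hcard : T.card = s0 := by
      rw [hT, Finset.card_image_of_injective _ hψ, Finset.card_univ, Fintype.card_fin]
    set e := T.orderIsoOfFin hcard with he
    set φ : Fin s0 → ℕ+ := fun i => (e i.rev : ℕ+) with hφdef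
    have hφanti : StrictAnti φ := by
      intro i j hij
      have h1 : j.rev < i.rev := by
        rw [Fin.rev_lt_rev]
        exact hij
      have h2 : e j.rev < e i.rev := e.lt_iff_lt.mpr h1
      exact h2
    have hφinj : Function.Injective φ := hφanti.injective
    set π : Fin s0 → Fin s0 :=
      fun i => (e.symm ⟨ψ i, by rw [hT]; exact Finset.mem_image_of_mem ψ (Finset.mem_univ i)⟩).rev
      with hπ
    have hφπ : φ ∘ π = ψ := by
      funext i
      show (e ((e.symm _).rev.rev) : ℕ+) = ψ i
      rw [Fin.rev_rev, OrderIso.apply_symm_apply]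
    set q : MvPolynomial (Fin s0) ℂ := MvPolynomial.rename π q0 with hqdef
    have hFq' : f - g = MvPolynomial.rename φ q := by
      rw [hqdef, MvPolynomial.rename_rename, hφπ, hFq]
    have hsupp : ∀ m ∈ (f - g).support, (m.sum fun k e => (k : ℕ) * e) ≤ n := by
      intro m hm
      rcases Finset.mem_union.mp (MvPolynomial.support_sub _ f g hm) with h1 | h1
      exacts [hf _ h1, hg _ h1]
    have hwq : ∀ m ∈ q.support, (∑ i, (φ i : ℕ) * m i) ≤ n := by
      intro m hm
      have hmem : Finsupp.mapDomain φ m ∈ (f - g).support := by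
        rw [hFq', MvPolynomial.support_rename_of_injective hφinj]
        exact Finset.mem_image_of_mem _ hm
      have hwt : ((Finsupp.mapDomain φ m).sum fun k e => (k : ℕ) * e)
          = ∑ i, (φ i : ℕ) * m i := by
        rw [Finsupp.sum_mapDomain_index (by intro b; simp) (by intro b m1 m2; ring)]
        rw [Finsupp.sum_fintype]
        intro i
        simp
      rw [← hwt]
      exact hsupp _ hmem
    have hzq : ∀ a : Fin s0 → ℕ, (∑ i, (φ i : ℕ) * a i) ≤ n →
        MvPolynomial.eval (Vf φ a) q = 0 := by
      intro a ha
      set μa : Multiset ℕ :=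
        (Finset.univ.val : Multiset (Fin s0)).bind
          (fun i => Multiset.replicate (a i) ((φ i : ℕ))) with hμ
      have hpos : ∀ i ∈ μa, 0 < i := by
        intro i hi
        rw [hμ, Multiset.mem_bind] at hi
        obtain ⟨j, _, hj⟩ := hi
        rw [Multiset.eq_of_mem_replicate hj]
        exact (φ j).pos
      have hsum : μa.sum ≤ n := by
        rw [hμ, Multiset.sum_bind]
        have h5 : ((Finset.univ.val : Multiset (Fin s0)).map
            fun i => (Multiset.replicate (a i) ((φ i : ℕ))).sum).sum
            = ∑ i : Fin s0, a i * (φ i : ℕ) := by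
          rw [Finset.sum_eq_multiset_sum]
          congr 1
          apply Multiset.map_congr rfl
          intro i _
          rw [Multiset.sum_replicate, smul_eq_mul]
        rw [h5]
        calc (∑ i : Fin s0, a i * (φ i : ℕ)) = ∑ i : Fin s0, (φ i : ℕ) * a i := by
              apply Finset.sum_congr rfl; intros; ring
          _ ≤ n := ha
      have h0 := h μa hpos hsum
      have hsub : evalXi μa (f - g) = 0 := by
        unfold evalXi at h0 ⊢
        rw [map_sub, h0, sub_self]
      rw [hFq'] at hsub
      unfold evalXi at hsub
      rw [MvPolynomial.eval_rename] at hsub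
      have hVeq : ((fun k : ℕ+ => pEvalM (k : ℕ) (xiM μa)) ∘ φ) = Vf φ a := by
        funext i
        show pEvalM (φ i : ℕ) (xiM μa) = _
        rw [pEvalM_xiM, hμ, Multiset.map_bind, Multiset.sum_bind]
        have h6 : ((Finset.univ.val : Multiset (Fin s0)).map fun jj =>
            ((Multiset.replicate (a jj) ((φ jj : ℕ))).map fun r =>
              ((Multiset.range r).map fun j : ℕ =>
                Complex.exp (2 * Real.pi * Complex.I * j / r) ^ (φ i : ℕ)).sum).sum).sum
            = ∑ jj : Fin s0, (a jj : ℂ) *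
                ((Multiset.range ((φ jj : ℕ))).map fun j : ℕ =>
                  Complex.exp (2 * Real.pi * Complex.I * j / ((φ jj : ℕ) : ℂ))
                    ^ (φ i : ℕ)).sum := by
          rw [Finset.sum_eq_multiset_sum]
          congr 1
          apply Multiset.map_congr rfl
          intro jj _
          rw [Multiset.map_replicate, Multiset.sum_replicate, nsmul_eq_mul]
        rw [h6]
        unfold Vf
        apply Finset.sum_congr rfl
        intro jj _
        rw [rootSum _ _ (φ jj).pos (φ i).pos]
        by_cases hd : (φ jj : ℕ) ∣ (φ i : ℕ)
        · rw [if_pos hd, if_pos hd]; ring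
        · rw [if_neg hd, if_neg hd, mul_zero]
      rw [← hVeq]
      exact hsub
    have hq0 : q = 0 := keyL s0 φ hφanti n q hwq hzq
    rw [hFq', hq0, map_zero]
  exact sub_eq_zero.mp hzero
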